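/- Let X be a compact metrizable space, M a nonempty weak*-compact set of Borel probability measures on X such that every μ ∈ M gives every singleton measure zero. Then for every ε > 0 there exists δ > 0 such that every subset A of X with diameter less than δ satisfies μ(A) < ε for all μ ∈ M. -/

import Mathlib

open MeasureTheory Filter Metric ENNReal Topology

theorem stmt6 {X : Type*} [MetricSpace X] [CompactSpace X]
    [MeasurableSpace X] [BorelSpace X]
    (M : Set (ProbabilityMeasure X)) (hne : M.Nonempty) (hcpt : IsCompact M)
    (hatom : ∀ μ ∈ M, ∀ x : X, (μ : Measure X) {x} = 0) :
    ∀ ε > (0 : ℝ), ∃ δ > (0 : ℝ), ∀ A : Set X, Metric.diam A < δ →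
      ∀ μ ∈ M, (μ : Measure X) A < ENNReal.ofReal ε := by
  intro ε hε
  by_contra hcon
  push_neg at hcon
  -- extract sequences
  have key : ∀ n : ℕ, ∃ A : Set X, Metric.diam A < 1 / (n + 1) ∧
      ∃ μ ∈ M, ENNReal.ofReal ε ≤ (μ : Measure X) A := by
    intro n
    obtain ⟨A, hA, μ, hμM, hμA⟩ := hcon (1 / (n + 1)) (by positivity)
    exact ⟨A, hA, μ, hμM, hμA⟩
  choose A hAdiam μs hμsM hμsA using key
  have hεpos : (0 : ℝ≥0∞) < ENNReal.ofReal ε := ENNReal.ofReal_pos.mpr hε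
  have hAne : ∀ n, (A n).Nonempty := by
    intro n
    rcases Set.eq_empty_or_nonempty (A n) with h | h
    · exfalso
      have := hμsA n
      rw [h, measure_empty] at this
      exact absurd this (not_le.mpr hεpos)
    · exact h
  choose x hx using hAne
  -- compactness of X : convergent subsequence of x
  obtain ⟨x₀, -, φ, hφ, hxlim⟩ :=
    IsCompact.tendsto_subseq (isCompact_univ (X := X)) (fun n => Set.mem_univ (x n))
  -- compactness of M : convergent subsequence of μs ∘ φ
  obtain ⟨μ₀, hμ₀M, ψ, hψ, hμlim⟩ :=
    IsCompact.tendsto_subseq hcpt (fun n => hμsM (φ n))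
  set σ : ℕ → ℕ := φ ∘ ψ with hσ
  have hσmono : StrictMono σ := hφ.comp hψ
  have hxlim' : Tendsto (fun n => x (σ n)) atTop (𝓝 x₀) :=
    hxlim.comp hψ.tendsto_atTop
  -- choose r > 0 with μ₀ (closedBall x₀ r) < ε
  have hth : Tendsto (fun r => (μ₀ : Measure X) (Metric.cthickening r {x₀}))
      (𝓝[>] 0) (𝓝 ((μ₀ : Measure X) {x₀})) := by
    apply Tendsto.mono_left _ nhdsWithin_le_nhds
    apply tendsto_measure_cthickening_of_isClosed
    · exact ⟨1, one_pos, measure_ne_top _ _⟩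
    · exact isClosed_singleton
  rw [hatom μ₀ hμ₀M x₀] at hth
  have hev : ∀ᶠ r in 𝓝[>] (0:ℝ),
      (μ₀ : Measure X) (Metric.cthickening r {x₀}) < ENNReal.ofReal ε :=
    hth.eventually_lt_const hεpos
  obtain ⟨r, hrball, hrpos⟩ := (hev.and self_mem_nhdsWithin).exists
  rw [Metric.cthickening_singleton _ hrpos.le] at hrball
  -- eventually A (σ n) ⊆ closedBall x₀ r
  have hsub : ∀ᶠ n in atTop, A (σ n) ⊆ Metric.closedBall x₀ r := by
    have h1 : Tendsto (fun n => Metric.diam (A (σ n))) atTop (𝓝 0) := by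
      apply squeeze_zero (fun n => Metric.diam_nonneg)
        (fun n => (hAdiam (σ n)).le)
      have : Tendsto (fun n : ℕ => 1 / ((n : ℝ) + 1)) atTop (𝓝 0) :=
        tendsto_one_div_add_atTop_nhds_zero_nat
      exact this.comp hσmono.tendsto_atTop
    have h2 : Tendsto (fun n => Metric.diam (A (σ n)) + dist (x (σ n)) x₀)
        atTop (𝓝 0) := by
      have := h1.add (tendsto_iff_dist_tendsto_zero.mp hxlim')
      simpa using this
    filter_upwards [h2.eventually_le_const hrpos] with n hn y hy
    have hd : dist y x₀ ≤ dist y (x (σ n)) + dist (x (σ n)) x₀ := dist_triangle _ _ _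
    have hdy : dist y (x (σ n)) ≤ Metric.diam (A (σ n)) :=
      Metric.dist_le_diam_of_mem (Metric.isBounded_of_compactSpace) hy (hx (σ n))
    exact Metric.mem_closedBall.mpr (hd.trans ((add_le_add hdy le_rfl).trans hn))
  -- portmanteau
  have hlimsup := ProbabilityMeasure.limsup_measure_closed_le_of_tendsto hμlim
    (Metric.isClosed_closedBall (x := x₀) (ε := r))
  have hge : ENNReal.ofReal ε ≤
      atTop.limsup fun n => ((((fun n => μs (φ n)) ∘ ψ) n : ProbabilityMeasure X) :
        Measure X) (Metric.closedBall x₀ r) := by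
    have hev2 : ∀ᶠ n in atTop,
        ENNReal.ofReal ε ≤ ((((fun n => μs (φ n)) ∘ ψ) n : ProbabilityMeasure X) :
          Measure X) (Metric.closedBall x₀ r) := by
      filter_upwards [hsub] with n hn
      exact (hμsA (σ n)).trans (measure_mono hn)
    calc ENNReal.ofReal ε = atTop.limsup (fun _ : ℕ => ENNReal.ofReal ε) := by
          simp
      _ ≤ _ := Filter.limsup_le_limsup hev2
  exact absurd (hge.trans hlimsup) (not_le.mpr hrball)
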